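/- arXiv:2203.10280 — 2 statements merged into one kernel-verified Lean document; each statement's English description precedes it below -/
import Mathlib

section
/- Bernstein's inequality: Let X_1,...,X_n be independent random variables with X_i ∈ [a,b] for all i, where -∞ < a ≤ b < +∞. Let X̄ = (1/n)(X_1+...+X_n) and σ² = Σ_{i=1}^n Var[X_i]. Then for any t > 0, P(X̄ - E[X̄] ≥ t) ≤ exp(-n t² / (2σ² + 2t(b-a)/3)). -/
open MeasureTheory ProbabilityTheory Real Nat

lemma aux_exp_le_neg {x : ℝ} (hx : x ≤ 0) : Real.exp x ≤ 1 + x + x ^ 2 / 2 := by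
  have hd : ∀ y : ℝ, HasDerivAt (fun z : ℝ => 1 + z + z ^ 2 / 2 - Real.exp z)
      (1 + y - Real.exp y) y := by
    intro y
    have h1 : HasDerivAt (fun z : ℝ => 1 + z + z ^ 2 / 2 - Real.exp z)
        (0 + 1 + (2 * y ^ 1) / 2 - Real.exp y) y := by
      exact (((hasDerivAt_const y (1:ℝ)).add (hasDerivAt_id y)).add
        ((hasDerivAt_pow 2 y).div_const 2)).sub (Real.hasDerivAt_exp y)
    convert h1 using 1
    ring
  have hanti : Antitone (fun z : ℝ => 1 + z + z ^ 2 / 2 - Real.exp z) := by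
    apply antitone_of_deriv_nonpos
    · exact fun y => (hd y).differentiableAt
    · intro y
      rw [(hd y).deriv]
      have := Real.add_one_le_exp y
      linarith
  have := hanti hx
  simp only [Real.exp_zero] at this
  linarith

lemma aux_fact (k : ℕ) : 2 * 3 ^ k ≤ (k + 2)! := by
  induction k with
  | zero => simp [Nat.factorial]
  | succ k ih =>
    have : (k + 3)! = (k + 3) * (k + 2)! := rfl
    calc 2 * 3 ^ (k + 1) = 3 * (2 * 3 ^ k) := by ring
    _ ≤ 3 * (k + 2)! := by omega
    _ ≤ (k + 3) * (k + 2)! := by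
        have : (k+2)! ≥ 1 := Nat.one_le_iff_ne_zero.mpr (Nat.factorial_ne_zero _)
        nlinarith
    _ = (k + 3)! := this.symm

set_option maxHeartbeats 1000000 in
lemma aux_exp_le_pos {x : ℝ} (hx0 : 0 ≤ x) (hx3 : x < 3) :
    Real.exp x ≤ 1 + x + x ^ 2 / (2 * (1 - x / 3)) := by
  have hsum : Summable (fun n : ℕ => x ^ n / n !) := Real.summable_pow_div_factorial x
  have hexp : Real.exp x = ∑' n : ℕ, x ^ n / n ! := by
    rw [Real.exp_eq_exp_ℝ, NormedSpace.exp_eq_tsum_div]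
  have hsplit : ∑ i ∈ Finset.range 2, x ^ i / (i)! + ∑' k : ℕ, x ^ (k + 2) / (k + 2)!
      = ∑' n : ℕ, x ^ n / n ! := Summable.sum_add_tsum_nat_add 2 hsum
  have hhead : ∑ i ∈ Finset.range 2, x ^ i / (i)! = 1 + x := by
    simp [Finset.sum_range_succ, Nat.factorial]
  have hr : (0:ℝ) ≤ x / 3 := by linarith
  have hr1 : x / 3 < 1 := by linarith
  have hgsum : Summable (fun k : ℕ => (x / 3) ^ k) := summable_geometric_of_lt_one hr hr1
  have hle : ∀ k : ℕ, x ^ (k + 2) / ((k + 2)! : ℝ) ≤ x ^ 2 / 2 * (x / 3) ^ k := by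
    intro k
    have h1 : x ^ (k + 2) / ((k + 2)! : ℝ) = x ^ 2 * x ^ k / ((k + 2)! : ℝ) := by
      rw [pow_add]; ring_nf
    have h2 : x ^ 2 / 2 * (x / 3) ^ k = x ^ 2 * x ^ k / (2 * 3 ^ k) := by
      rw [div_pow]; ring
    rw [h1, h2]
    apply div_le_div_of_nonneg_left (by positivity) (by positivity)
    · exact_mod_cast aux_fact k
  have htail : ∑' k : ℕ, x ^ (k + 2) / (k + 2)! ≤ ∑' k : ℕ, x ^ 2 / 2 * (x / 3) ^ k :=
    Summable.tsum_le_tsum hle ((summable_nat_add_iff 2).mpr hsum) (hgsum.mul_left _)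
  have hgeo : ∑' k : ℕ, x ^ 2 / 2 * (x / 3) ^ k = x ^ 2 / (2 * (1 - x / 3)) := by
    rw [tsum_mul_left, tsum_geometric_of_lt_one hr hr1]
    field_simp
  rw [hexp, ← hsplit, hhead]
  rw [hgeo] at htail
  linarith

lemma aux_exp_le_quad {x u : ℝ} (hx : x ≤ u) (hu0 : 0 ≤ u) (hu3 : u < 3) :
    Real.exp x ≤ 1 + x + x ^ 2 / (2 * (1 - u / 3)) := by
  have hden : (0:ℝ) < 2 * (1 - u / 3) := by linarith
  rcases le_or_gt x 0 with hx0 | hx0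
  · refine (aux_exp_le_neg hx0).trans ?_
    have : x ^ 2 / 2 ≤ x ^ 2 / (2 * (1 - u / 3)) := by
      apply div_le_div_of_nonneg_left (sq_nonneg x) hden (by linarith)
    linarith
  · refine (aux_exp_le_pos hx0.le (lt_of_le_of_lt hx hu3)).trans ?_
    have : x ^ 2 / (2 * (1 - x / 3)) ≤ x ^ 2 / (2 * (1 - u / 3)) := by
      apply div_le_div_of_nonneg_left (sq_nonneg x) hden (by linarith)
    linarith

lemma bernstein_core {Ω : Type*} [MeasurableSpace Ω] (μ : Measure Ω) [IsProbabilityMeasure μ]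
    (n : ℕ) (X : Fin n → Ω → ℝ) (a b : ℝ) (hab : a ≤ b)
    (hmeas : ∀ i, Measurable (X i))
    (hbound : ∀ i, ∀ᵐ ω ∂μ, X i ω ∈ Set.Icc a b)
    (hindep : iIndepFun X μ)
    (s l : ℝ) (hl : 0 ≤ l) (hlc : l * (b - a) < 3) :
    (μ {ω | s ≤ ∑ i, (X i ω - ∫ ω', X i ω' ∂μ)}).toReal
      ≤ Real.exp (l ^ 2 * (∑ i, variance (X i) μ) / (2 * (1 - l * (b - a) / 3)) - l * s) := by
  set c : ℝ := b - a with hc_def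
  have hc : 0 ≤ c := by simp [hc_def]; linarith
  have hlc0 : 0 ≤ l * c := mul_nonneg hl hc
  have hden : 0 < 2 * (1 - l * c / 3) := by nlinarith [hlc, hlc0]
  set m : Fin n → ℝ := fun i => ∫ ω', X i ω' ∂μ with hm_def
  set Y : Fin n → Ω → ℝ := fun i ω => X i ω - m i with hY_def
  have hYmeas : ∀ i, Measurable (Y i) := fun i => (hmeas i).sub measurable_const
  have hXmem : ∀ i, MemLp (X i) 2 μ := fun i =>
    memLp_of_bounded (hbound i) (hmeas i).aestronglyMeasurable 2
  have hXint : ∀ i, Integrable (X i) μ := fun i => (hXmem i).integrable one_le_two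
  have hma : ∀ i, a ≤ m i := by
    intro i
    have : ∫ ω', (fun _ => a) ω' ∂μ ≤ ∫ ω', X i ω' ∂μ :=
      integral_mono_ae (integrable_const a) (hXint i) ((hbound i).mono fun ω h => h.1)
    simpa using this
  have hmb : ∀ i, m i ≤ b := by
    intro i
    have : ∫ ω', X i ω' ∂μ ≤ ∫ ω', (fun _ => b) ω' ∂μ :=
      integral_mono_ae (hXint i) (integrable_const b) ((hbound i).mono fun ω h => h.2)
    simpa using this
  have hYle : ∀ i, ∀ᵐ ω ∂μ, Y i ω ≤ c := fun i =>
    (hbound i).mono fun ω h => by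
      simp only [hY_def, hc_def]
      have := h.2
      have := hma i
      linarith
  have hYabs : ∀ i, ∀ᵐ ω ∂μ, |Y i ω| ≤ c := fun i =>
    (hbound i).mono fun ω h => by
      rw [abs_le]
      constructor <;> simp only [hY_def, hc_def] <;>
        [have := h.1; have := h.2] <;> [have := hmb i; have := hma i] <;> linarith
  -- independence of the Y's
  have hYindep : iIndepFun Y μ := by
    have := hindep.comp (fun i (x : ℝ) => x - m i) (fun i => measurable_id.sub measurable_const)
    exact this
  -- integrability of exp (l * Y i)
  have hexp_int : ∀ i, Integrable (fun ω => rexp (l * Y i ω)) μ := by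
    intro i
    refine memLp_one_iff_integrable.mp (MemLp.of_bound
      (((hYmeas i).const_mul l).exp).aestronglyMeasurable (rexp (l * c)) ?_)
    filter_upwards [hYle i] with ω hω
    rw [Real.norm_eq_abs, abs_of_pos (exp_pos _)]
    exact exp_le_exp.mpr (mul_le_mul_of_nonneg_left hω hl)
  -- Chernoff
  have hSint : Integrable (fun ω => rexp (l * (∑ i, Y i) ω)) μ :=
    hYindep.integrable_exp_mul_sum hYmeas (fun i _ => hexp_int i)
  have hchernoff := measure_ge_le_exp_mul_mgf (μ := μ) (X := ∑ i, Y i) (t := l) s hl hSint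
  have hmgf_sum : mgf (∑ i, Y i) μ l = ∏ i, mgf (Y i) μ l := hYindep.mgf_sum hYmeas Finset.univ
  -- per-variable mgf bound
  have hmgf_le : ∀ i, mgf (Y i) μ l
      ≤ rexp (l ^ 2 * variance (X i) μ / (2 * (1 - l * c / 3))) := by
    intro i
    have hYint : Integrable (Y i) μ := (hXint i).sub (integrable_const (m i))
    have hYsq_int : Integrable (fun ω => Y i ω ^ 2) μ := by
      refine memLp_one_iff_integrable.mp (MemLp.of_bound
        ((hYmeas i).pow_const 2).aestronglyMeasurable (c ^ 2) ?_)
      filter_upwards [hYabs i] with ω hω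
      rw [Real.norm_eq_abs, abs_pow]
      exact pow_le_pow_left₀ (abs_nonneg _) hω 2
    have hEY : ∫ ω, Y i ω ∂μ = 0 := by
      simp only [hY_def]
      rw [integral_sub (hXint i) (integrable_const (m i)), integral_const]
      simp [hm_def]
    have hEYsq : ∫ ω, Y i ω ^ 2 ∂μ = variance (X i) μ := by
      rw [variance_eq_integral (hmeas i).aemeasurable]
    have hptwise : ∀ᵐ ω ∂μ, rexp (l * Y i ω)
        ≤ 1 + l * Y i ω + (l ^ 2 / (2 * (1 - l * c / 3))) * Y i ω ^ 2 := by
      filter_upwards [hYle i] with ω hω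
      have h := aux_exp_le_quad (x := l * Y i ω) (u := l * c)
        (mul_le_mul_of_nonneg_left hω hl) (mul_nonneg hl hc) hlc
      calc rexp (l * Y i ω) ≤ 1 + l * Y i ω + (l * Y i ω) ^ 2 / (2 * (1 - l * c / 3)) := h
      _ = 1 + l * Y i ω + (l ^ 2 / (2 * (1 - l * c / 3))) * Y i ω ^ 2 := by ring
    have hint_rhs : Integrable
        (fun ω => 1 + l * Y i ω + (l ^ 2 / (2 * (1 - l * c / 3))) * Y i ω ^ 2) μ :=
      ((integrable_const (1:ℝ)).add (hYint.const_mul l)).add (hYsq_int.const_mul _)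
    have h1 : mgf (Y i) μ l ≤ ∫ ω, (1 + l * Y i ω
        + (l ^ 2 / (2 * (1 - l * c / 3))) * Y i ω ^ 2) ∂μ :=
      integral_mono_ae (hexp_int i) hint_rhs hptwise
    have h2 : ∫ ω, (1 + l * Y i ω + (l ^ 2 / (2 * (1 - l * c / 3))) * Y i ω ^ 2) ∂μ
        = 1 + l ^ 2 * variance (X i) μ / (2 * (1 - l * c / 3)) := by
      have hi1 : Integrable (fun ω => 1 + l * Y i ω) μ :=
        (integrable_const (1:ℝ)).add (hYint.const_mul l)
      have hi2 : Integrable (fun ω => (l ^ 2 / (2 * (1 - l * c / 3))) * Y i ω ^ 2) μ :=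
        hYsq_int.const_mul _
      rw [integral_add hi1 hi2,
        integral_add (integrable_const (1:ℝ)) (hYint.const_mul l),
        integral_const, integral_const_mul, integral_const_mul, hEY, hEYsq]
      simp; ring
    calc mgf (Y i) μ l ≤ 1 + l ^ 2 * variance (X i) μ / (2 * (1 - l * c / 3)) := by
          rw [← h2]; exact h1
    _ ≤ rexp (l ^ 2 * variance (X i) μ / (2 * (1 - l * c / 3))) := by
          rw [add_comm]; exact Real.add_one_le_exp _
  -- combine
  have hprod : ∏ i, mgf (Y i) μ l
      ≤ rexp (l ^ 2 * (∑ i, variance (X i) μ) / (2 * (1 - l * c / 3))) := by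
    calc ∏ i, mgf (Y i) μ l
        ≤ ∏ i, rexp (l ^ 2 * variance (X i) μ / (2 * (1 - l * c / 3))) :=
          Finset.prod_le_prod (fun i _ => mgf_nonneg) (fun i _ => hmgf_le i)
    _ = rexp (∑ i, l ^ 2 * variance (X i) μ / (2 * (1 - l * c / 3))) := by
          rw [Real.exp_sum]
    _ = rexp (l ^ 2 * (∑ i, variance (X i) μ) / (2 * (1 - l * c / 3))) := by
          rw [← Finset.sum_div, ← Finset.mul_sum]
  have hset : {ω | s ≤ ∑ i, (X i ω - ∫ ω', X i ω' ∂μ)} = {ω | s ≤ (∑ i, Y i) ω} := by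
    ext ω
    simp [hY_def, hm_def]
  rw [hset]
  calc (μ {ω | s ≤ (∑ i, Y i) ω}).toReal
      ≤ rexp (-l * s) * mgf (∑ i, Y i) μ l := hchernoff
  _ ≤ rexp (-l * s) * rexp (l ^ 2 * (∑ i, variance (X i) μ) / (2 * (1 - l * c / 3))) := by
      rw [hmgf_sum]
      exact mul_le_mul_of_nonneg_left hprod (exp_pos _).le
  _ = rexp (l ^ 2 * (∑ i, variance (X i) μ) / (2 * (1 - l * c / 3)) - l * s) := by
      rw [← Real.exp_add]; ring_nf


/-- Bernstein's inequality. -/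
theorem bernstein_inequality
    {Ω : Type*} [MeasurableSpace Ω] (μ : Measure Ω) [IsProbabilityMeasure μ]
    (n : ℕ) (hn : 0 < n) (X : Fin n → Ω → ℝ) (a b : ℝ) (hab : a ≤ b)
    (hmeas : ∀ i, Measurable (X i))
    (hbound : ∀ i, ∀ᵐ ω ∂μ, X i ω ∈ Set.Icc a b)
    (hindep : iIndepFun X μ)
    (σ2 : ℝ) (hσ2 : σ2 = ∑ i, variance (X i) μ)
    (t : ℝ) (ht : 0 < t) :
    (μ {ω | (∑ i, X i ω) / n - (∫ ω, (∑ i, X i ω) / n ∂μ) ≥ t}).toReal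
      ≤ Real.exp (-(n * t ^ 2) / (2 * σ2 + 2 * t * (b - a) / 3)) := by
  have hc : (0:ℝ) ≤ b - a := by linarith
  have hn1 : (1:ℝ) ≤ (n:ℝ) := by exact_mod_cast hn
  have hnpos : (0:ℝ) < (n:ℝ) := by linarith
  have hntpos : 0 < (n:ℝ) * t := by positivity
  have hXint : ∀ i, Integrable (X i) μ := fun i =>
    (memLp_of_bounded (hbound i) (hmeas i).aestronglyMeasurable 2).integrable one_le_two
  have hσ2nn : 0 ≤ σ2 := by
    rw [hσ2]; exact Finset.sum_nonneg fun i _ => variance_nonneg _ _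
  -- rewrite the event
  have hint_eq : (∫ ω, (∑ i, X i ω) / n ∂μ) = (∑ i, ∫ ω', X i ω' ∂μ) / n := by
    rw [integral_div, integral_finset_sum _ (fun i _ => hXint i)]
  have hset : {ω | (∑ i, X i ω) / n - (∫ ω, (∑ i, X i ω) / n ∂μ) ≥ t}
      = {ω | (n:ℝ) * t ≤ ∑ i, (X i ω - ∫ ω', X i ω' ∂μ)} := by
    ext ω
    simp only [Set.mem_setOf_eq, hint_eq, ge_iff_le, Finset.sum_sub_distrib]
    rw [← sub_div, le_div_iff₀ hnpos, mul_comm]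
  rw [hset]
  -- main case split
  by_cases hV : 0 < σ2
  · -- positive variance case
    have hd : 0 < σ2 + t * (b - a) / 3 := by positivity
    set d : ℝ := σ2 + t * (b - a) / 3 with hd_def
    set l : ℝ := t / d with hl_def
    have hl : 0 ≤ l := by positivity
    have hlc : l * (b - a) < 3 := by
      rw [hl_def, div_mul_eq_mul_div, div_lt_iff₀ hd, hd_def]
      nlinarith
    have hcore := bernstein_core μ n X a b hab hmeas hbound hindep ((n:ℝ) * t) l hl hlc
    rw [← hσ2] at hcore
    refine hcore.trans (Real.exp_le_exp.mpr ?_)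
    have hdne : d ≠ 0 := ne_of_gt hd
    have he0 : 1 - l * (b - a) / 3 = σ2 / d := by
      rw [hl_def]
      field_simp
      rw [hd_def]; ring
    have he1 : l ^ 2 * σ2 / (2 * (1 - l * (b - a) / 3)) = t ^ 2 / (2 * d) := by
      rw [he0, hl_def]
      field_simp
    have he3 : l * ((n:ℝ) * t) = (n:ℝ) * t ^ 2 / d := by
      rw [hl_def]; field_simp
    have he4 : 2 * σ2 + 2 * t * (b - a) / 3 = 2 * d := by rw [hd_def]; ring
    rw [he1, he3, he4]
    have hfrac : t ^ 2 / (2 * d) - (n:ℝ) * t ^ 2 / d = ((1:ℝ) - 2 * n) * t ^ 2 / (2 * d) := by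
      field_simp
    rw [hfrac, div_le_div_iff₀ (by positivity) (by positivity)]
    nlinarith [mul_nonneg (mul_nonneg (sub_nonneg.mpr hn1) (sq_nonneg t)) hd.le]
  · -- zero variance case
    have hV0 : σ2 = 0 := le_antisymm (not_lt.mp hV) hσ2nn
    by_cases hba : b - a = 0
    · have hzero : 2 * σ2 + 2 * t * (b - a) / 3 = 0 := by rw [hV0, hba]; ring
      rw [hzero, div_zero, Real.exp_zero]
      calc (μ _).toReal ≤ (1 : ENNReal).toReal :=
            ENNReal.toReal_mono ENNReal.one_ne_top prob_le_one
      _ = 1 := ENNReal.toReal_one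
    · have hba' : 0 < b - a := lt_of_le_of_ne hc (Ne.symm hba)
      set l : ℝ := 2 / (b - a) with hl_def
      have hl : 0 ≤ l := by positivity
      have hlc : l * (b - a) < 3 := by
        rw [hl_def, div_mul_cancel₀ _ hba]
        norm_num
      have hcore := bernstein_core μ n X a b hab hmeas hbound hindep ((n:ℝ) * t) l hl hlc
      rw [← hσ2] at hcore
      refine hcore.trans (Real.exp_le_exp.mpr ?_)
      rw [hV0]
      have he : -((n:ℝ) * t ^ 2) / (2 * 0 + 2 * t * (b - a) / 3)
          = -(3 * ((n:ℝ) * t)) / (2 * (b - a)) := by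
        field_simp
        ring
      rw [he]
      have hLHS : l ^ 2 * 0 / (2 * (1 - l * (b - a) / 3)) - l * ((n:ℝ) * t)
          = -(2 * ((n:ℝ) * t)) / (b - a) := by
        rw [hl_def]; field_simp; ring
      rw [hLHS, div_le_div_iff₀ (by positivity) (by positivity)]
      nlinarith
end

section
/- Hoeffding's inequality: Let X_1,...,X_n be independent random variables with X_i ∈ [a,b] for all i, where -∞ < a ≤ b < +∞. Let X̄ = (1/n)(X_1+...+X_n). Then for any t > 0, P(X̄ - E[X̄] ≥ t) ≤ exp(-2n t² / (b-a)²). -/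
open MeasureTheory ProbabilityTheory Real


lemma hoeffding_aux_g_pos (p : ℝ) (hp0 : 0 ≤ p) (hp1 : p ≤ 1) (x : ℝ) :
    0 < 1 - p + p * exp x := by
  rcases eq_or_lt_of_le hp0 with h | h
  · simp [← h]
  · have := exp_pos x
    nlinarith

lemma hoeffding_aux_log (p : ℝ) (hp0 : 0 ≤ p) (hp1 : p ≤ 1) (h : ℝ) :
    Real.log (1 - p + p * exp h) ≤ p * h + h ^ 2 / 8 := by
  set g : ℝ → ℝ := fun x => 1 - p + p * exp x with hg_def
  have hg_pos : ∀ x, 0 < g x := fun x => hoeffding_aux_g_pos p hp0 hp1 x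
  have hg_ne : ∀ x, g x ≠ 0 := fun x => (hg_pos x).ne'
  have hg_deriv : ∀ x, HasDerivAt g (p * exp x) x := by
    intro x
    exact ((Real.hasDerivAt_exp x).const_mul p).const_add (1 - p)
  set F : ℝ → ℝ := fun x => p * x + x ^ 2 / 8 - Real.log (g x) with hF_def
  set φ : ℝ → ℝ := fun x => p + x / 4 - p * exp x / g x with hφ_def
  have hF_deriv : ∀ x, HasDerivAt F (φ x) x := by
    intro x
    have h1 : HasDerivAt (fun x : ℝ => p * x) p x := by
      simpa using (hasDerivAt_id x).const_mul p
    have h2 : HasDerivAt (fun x : ℝ => x ^ 2 / 8) (x / 4) x := by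
      have := (hasDerivAt_pow 2 x).div_const 8
      refine this.congr_deriv ?_
      norm_num
      ring
    have h3 : HasDerivAt (fun x => Real.log (g x)) (p * exp x / g x) x :=
      (hg_deriv x).log (hg_ne x)
    exact (h1.add h2).sub h3
  have hφ_deriv : ∀ x, HasDerivAt φ (1 / 4 - p * exp x * (1 - p) / (g x) ^ 2) x := by
    intro x
    have h1 : HasDerivAt (fun x : ℝ => p + x / 4) (1 / 4) x := by
      simpa using ((hasDerivAt_id x).div_const 4).const_add p
    have h2 : HasDerivAt (fun x => p * exp x / g x)
        ((p * exp x * g x - p * exp x * (p * exp x)) / (g x) ^ 2) x :=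
      ((Real.hasDerivAt_exp x).const_mul p).div (hg_deriv x) (hg_ne x)
    have := h1.sub h2
    refine this.congr_deriv ?_
    have : g x = 1 - p + p * exp x := rfl
    rw [this]
    ring
  have hφ_mono : Monotone φ := by
    apply monotone_of_deriv_nonneg
    · exact fun x => (hφ_deriv x).differentiableAt
    · intro x
      rw [(hφ_deriv x).deriv]
      have hgx := hg_pos x
      have hgx2 : 0 < (g x) ^ 2 := by positivity
      rw [sub_nonneg, div_le_iff₀ hgx2]
      have hgeq : g x = 1 - p + p * exp x := rfl
      nlinarith [sq_nonneg (1 - p - p * exp x)]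
  have hφ0 : φ 0 = 0 := by
    have : g 0 = 1 := by simp [hg_def]
    simp [hφ_def, this]
  have hF0 : F 0 = 0 := by
    have : g 0 = 1 := by simp [hg_def]
    simp [hF_def, this]
  have hFd : Differentiable ℝ F := fun x => (hF_deriv x).differentiableAt
  have key : 0 ≤ F h := by
    rcases le_or_gt 0 h with hh | hh
    · have hmono : MonotoneOn F (Set.Ici (0 : ℝ)) := by
        apply monotoneOn_of_deriv_nonneg (convex_Ici 0) hFd.continuous.continuousOn
          (hFd.differentiableOn)
        intro x hx
        rw [(hF_deriv x).deriv]
        rw [← hφ0]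
        exact hφ_mono (le_of_lt (by simpa using hx))
      have := hmono (Set.self_mem_Ici) hh hh
      linarith [hF0 ▸ this]
    · have hanti : AntitoneOn F (Set.Iic (0 : ℝ)) := by
        apply antitoneOn_of_deriv_nonpos (convex_Iic 0) hFd.continuous.continuousOn
          (hFd.differentiableOn)
        intro x hx
        rw [(hF_deriv x).deriv]
        rw [← hφ0]
        exact hφ_mono (le_of_lt (by simpa using hx))
      have := hanti (le_of_lt (by simpa using hh)) (Set.self_mem_Iic) hh.le
      linarith [hF0 ▸ this]
  have : Real.log (g h) ≤ p * h + h ^ 2 / 8 := by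
    simp only [hF_def] at key
    linarith
  simpa [hg_def] using this

lemma hoeffding_aux_exp (p : ℝ) (hp0 : 0 ≤ p) (hp1 : p ≤ 1) (h : ℝ) :
    1 - p + p * exp h ≤ exp (p * h + h ^ 2 / 8) := by
  have := hoeffding_aux_log p hp0 hp1 h
  have hpos := hoeffding_aux_g_pos p hp0 hp1 h
  calc 1 - p + p * exp h = exp (Real.log (1 - p + p * exp h)) := (exp_log hpos).symm
    _ ≤ exp (p * h + h ^ 2 / 8) := exp_le_exp.2 this

section helpers
variable {Ω : Type*} [MeasurableSpace Ω] {μ : Measure Ω}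

lemma integrable_of_mem_Icc [IsProbabilityMeasure μ] {X : Ω → ℝ} (hX : Measurable X)
    {l u : ℝ} (hb : ∀ᵐ ω ∂μ, X ω ∈ Set.Icc l u) : Integrable X μ := by
  refine Integrable.mono' (integrable_const (max |l| |u|)) hX.aestronglyMeasurable ?_
  filter_upwards [hb] with ω hω
  rw [Real.norm_eq_abs, abs_le]
  constructor
  · have : -(max |l| |u|) ≤ -|l| := neg_le_neg (le_max_left _ _)
    calc -(max |l| |u|) ≤ -|l| := this
      _ ≤ l := neg_abs_le l
      _ ≤ X ω := hω.1
  · calc X ω ≤ u := hω.2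
      _ ≤ |u| := le_abs_self u
      _ ≤ max |l| |u| := le_max_right _ _

lemma integrable_exp_of_mem_Icc [IsProbabilityMeasure μ] {X : Ω → ℝ} (hX : Measurable X)
    {l u : ℝ} (s : ℝ) (hb : ∀ᵐ ω ∂μ, X ω ∈ Set.Icc l u) :
    Integrable (fun ω => exp (s * X ω)) μ := by
  refine Integrable.mono' (integrable_const (exp (|s| * max |l| |u|)))
    ((hX.const_mul s).exp.aestronglyMeasurable) ?_
  filter_upwards [hb] with ω hω
  rw [Real.norm_eq_abs, abs_of_pos (exp_pos _), exp_le_exp]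
  have hXabs : |X ω| ≤ max |l| |u| := by
    rw [abs_le]
    constructor
    · calc -(max |l| |u|) ≤ -|l| := neg_le_neg (le_max_left _ _)
        _ ≤ l := neg_abs_le l
        _ ≤ X ω := hω.1
    · calc X ω ≤ u := hω.2
        _ ≤ |u| := le_abs_self u
        _ ≤ max |l| |u| := le_max_right _ _
  calc s * X ω ≤ |s * X ω| := le_abs_self _
    _ = |s| * |X ω| := abs_mul s _
    _ ≤ |s| * max |l| |u| := by
        exact mul_le_mul_of_nonneg_left hXabs (abs_nonneg s)

/-- Hoeffding's lemma (mgf form). -/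
lemma mgf_le_of_mem_Icc [IsProbabilityMeasure μ] {X : Ω → ℝ} (hX : Measurable X)
    {l u : ℝ} (hlu : l < u) (s : ℝ) (hb : ∀ᵐ ω ∂μ, X ω ∈ Set.Icc l u) :
    mgf X μ s ≤ exp (s * μ[X] + s ^ 2 * (u - l) ^ 2 / 8) := by
  have hXint : Integrable X μ := integrable_of_mem_Icc hX hb
  have hul : (0:ℝ) < u - l := by linarith
  set m := μ[X] with hm
  have hml : l ≤ m := by
    have : μ[fun _ => l] ≤ μ[X] := integral_mono_ae (integrable_const l) hXint
      (by filter_upwards [hb] with ω hω using hω.1)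
    simpa using this
  have hmu : m ≤ u := by
    have : μ[X] ≤ μ[fun _ => u] := integral_mono_ae hXint (integrable_const u)
      (by filter_upwards [hb] with ω hω using hω.2)
    simpa using this
  set c1 : ℝ := (exp (s * u) - exp (s * l)) / (u - l) with hc1
  set c2 : ℝ := (u * exp (s * l) - l * exp (s * u)) / (u - l) with hc2
  -- pointwise convexity bound
  have hpt : ∀ᵐ ω ∂μ, exp (s * X ω) ≤ c1 * X ω + c2 := by
    filter_upwards [hb] with ω hω
    have hx1 := hω.1
    have hx2 := hω.2
    set x := X ω
    have hne : u - l ≠ 0 := hul.ne'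
    have hcoe : s * x = ((u - x)/(u - l)) • (s * l) + ((x - l)/(u - l)) • (s * u) := by
      simp only [smul_eq_mul]
      field_simp
      ring
    have hconv := convexOn_exp.2 (Set.mem_univ (s * l)) (Set.mem_univ (s * u))
      (div_nonneg (by linarith) hul.le)
      (div_nonneg (by linarith) hul.le)
      (by rw [← add_div, div_eq_one_iff_eq hne]; ring : (u - x)/(u - l) + (x - l)/(u - l) = 1)
    rw [← hcoe] at hconv
    calc exp (s * x) ≤ ((u - x)/(u - l)) • exp (s * l) + ((x - l)/(u - l)) • exp (s * u) := hconv
      _ = c1 * x + c2 := by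
          simp only [smul_eq_mul, hc1, hc2]
          field_simp
          ring
  have hint_exp : Integrable (fun ω => exp (s * X ω)) μ := integrable_exp_of_mem_Icc hX s hb
  have hint_lin : Integrable (fun ω => c1 * X ω + c2) μ :=
    (hXint.const_mul c1).add (integrable_const c2)
  have hstep1 : mgf X μ s ≤ c1 * m + c2 := by
    have := integral_mono_ae hint_exp hint_lin hpt
    rw [mgf]
    refine this.trans_eq ?_
    rw [integral_add (hXint.const_mul c1) (integrable_const c2), integral_const_mul]
    simp [hm]
  -- apply analytic lemma with p = (m - l)/(u - l), h = s*(u - l)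
  set p : ℝ := (m - l) / (u - l) with hp
  have hp0 : 0 ≤ p := div_nonneg (by linarith) hul.le
  have hp1 : p ≤ 1 := by rw [hp, div_le_one hul]; linarith
  have hkey := hoeffding_aux_exp p hp0 hp1 (s * (u - l))
  have heq1 : c1 * m + c2 = exp (s * l) * (1 - p + p * exp (s * (u - l))) := by
    have : exp (s * u) = exp (s * l) * exp (s * (u - l)) := by
      rw [← Real.exp_add]; ring_nf
    rw [hc1, hc2, hp, this]
    field_simp
    ring
  have heq2 : exp (s * l) * exp (p * (s * (u - l)) + (s * (u - l)) ^ 2 / 8)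
      = exp (s * m + s ^ 2 * (u - l) ^ 2 / 8) := by
    rw [← Real.exp_add]
    congr 1
    have : p * (s * (u - l)) = s * (m - l) := by
      rw [hp]; field_simp
    rw [this]; ring
  calc mgf X μ s ≤ c1 * m + c2 := hstep1
    _ = exp (s * l) * (1 - p + p * exp (s * (u - l))) := heq1
    _ ≤ exp (s * l) * exp (p * (s * (u - l)) + (s * (u - l)) ^ 2 / 8) := by
        exact mul_le_mul_of_nonneg_left hkey (exp_pos _).le
    _ = exp (s * m + s ^ 2 * (u - l) ^ 2 / 8) := heq2

end helpers

/-- Hoeffding's inequality. -/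
theorem hoeffding_inequality
    {Ω : Type*} [MeasurableSpace Ω] (μ : Measure Ω) [IsProbabilityMeasure μ]
    (n : ℕ) (hn : 0 < n) (X : Fin n → Ω → ℝ) (a b : ℝ) (hab : a ≤ b)
    (hmeas : ∀ i, Measurable (X i))
    (hbound : ∀ i, ∀ᵐ ω ∂μ, X i ω ∈ Set.Icc a b)
    (hindep : iIndepFun X μ)
    (t : ℝ) (ht : 0 < t) :
    (μ {ω | (∑ i, X i ω) / n - (∫ ω, (∑ i, X i ω) / n ∂μ) ≥ t}).toReal
      ≤ Real.exp (-(2 * n * t ^ 2) / (b - a) ^ 2) := by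
  rcases eq_or_lt_of_le hab with rfl | hlt
  · -- degenerate case a = b : RHS is exp(x/0) = exp 0 = 1
    have h1 : (μ {ω | (∑ i, X i ω) / n - (∫ ω, (∑ i, X i ω) / n ∂μ) ≥ t}).toReal ≤ 1 := by
      calc (μ _).toReal ≤ (μ Set.univ).toReal :=
            ENNReal.toReal_mono (measure_ne_top μ _) (measure_mono (Set.subset_univ _))
        _ = 1 := by simp
    simpa using h1
  have hba : (0:ℝ) < b - a := by linarith
  have hba' : (b - a) ≠ 0 := hba.ne'
  set m : Fin n → ℝ := fun i => μ[X i] with hm_def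
  set Y : Fin n → Ω → ℝ := fun i ω => X i ω - m i with hY_def
  have hYmeas : ∀ i, Measurable (Y i) := fun i => (hmeas i).sub measurable_const
  have hYindep : iIndepFun Y μ :=
    hindep.comp (fun i x => x - m i) (fun i => measurable_id.sub measurable_const)
  have hXint : ∀ i, Integrable (X i) μ := fun i => integrable_of_mem_Icc (hmeas i) (hbound i)
  have hYbound : ∀ i, ∀ᵐ ω ∂μ, Y i ω ∈ Set.Icc (a - m i) (b - m i) := by
    intro i
    filter_upwards [hbound i] with ω hω
    exact ⟨by simp only [hY_def]; linarith [hω.1], by simp only [hY_def]; linarith [hω.2]⟩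
  have hEY : ∀ i, μ[Y i] = 0 := by
    intro i
    simp only [hY_def]
    rw [integral_sub (hXint i) (integrable_const _)]
    simp [hm_def]
  have hNpos : (0:ℝ) < n := Nat.cast_pos.2 hn
  have hEmean : (∫ ω, (∑ i, X i ω) / n ∂μ) = (∑ i, m i) / n := by
    rw [integral_div]
    congr 1
    rw [integral_finset_sum _ (fun i _ => hXint i)]
  have hset : {ω | (∑ i, X i ω) / n - (∫ ω, (∑ i, X i ω) / n ∂μ) ≥ t}
      = {ω | (n:ℝ) * t ≤ (∑ i, Y i) ω} := by
    ext ω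
    simp only [Set.mem_setOf_eq, hEmean, Finset.sum_apply, hY_def, Finset.sum_sub_distrib]
    rw [ge_iff_le, div_sub_div_same, le_div_iff₀ hNpos, mul_comm]
  set s : ℝ := 4 * t / (b - a) ^ 2 with hs_def
  have hspos : 0 < s := by positivity
  have hYint_exp : ∀ i, Integrable (fun ω => exp (s * Y i ω)) μ :=
    fun i => integrable_exp_of_mem_Icc (hYmeas i) s (hYbound i)
  have hsum_int : Integrable (fun ω => exp (s * (∑ i, Y i) ω)) μ :=
    hYindep.integrable_exp_mul_sum hYmeas (fun i _ => hYint_exp i)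
  have chernoff := measure_ge_le_exp_mul_mgf (μ := μ) (X := ∑ i, Y i) (t := s)
    ((n:ℝ) * t) hspos.le hsum_int
  have hmgf_each : ∀ i, mgf (Y i) μ s ≤ exp (s ^ 2 * (b - a) ^ 2 / 8) := by
    intro i
    have h := mgf_le_of_mem_Icc (hYmeas i) (show a - m i < b - m i by linarith) s (hYbound i)
    rw [hEY i] at h
    have heq : s * 0 + s ^ 2 * ((b - m i) - (a - m i)) ^ 2 / 8
        = s ^ 2 * (b - a) ^ 2 / 8 := by ring
    rw [heq] at h
    exact h
  have hprod : ∏ i, mgf (Y i) μ s ≤ exp ((n:ℝ) * (s ^ 2 * (b - a) ^ 2 / 8)) := by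
    calc ∏ i, mgf (Y i) μ s ≤ ∏ _i : Fin n, exp (s ^ 2 * (b - a) ^ 2 / 8) :=
          Finset.prod_le_prod (fun i _ => mgf_nonneg) (fun i _ => hmgf_each i)
      _ = exp (s ^ 2 * (b - a) ^ 2 / 8) ^ n := by simp [Finset.prod_const]
      _ = exp ((n:ℝ) * (s ^ 2 * (b - a) ^ 2 / 8)) := by rw [← Real.exp_nat_mul]
  rw [hset]
  calc (μ {ω | (n:ℝ) * t ≤ (∑ i, Y i) ω}).toReal
      ≤ exp (-s * ((n:ℝ) * t)) * mgf (∑ i, Y i) μ s := chernoff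
    _ = exp (-s * ((n:ℝ) * t)) * ∏ i, mgf (Y i) μ s := by
        rw [hYindep.mgf_sum hYmeas Finset.univ]
    _ ≤ exp (-s * ((n:ℝ) * t)) * exp ((n:ℝ) * (s ^ 2 * (b - a) ^ 2 / 8)) :=
        mul_le_mul_of_nonneg_left hprod (exp_pos _).le
    _ = Real.exp (-(2 * n * t ^ 2) / (b - a) ^ 2) := by
        rw [← Real.exp_add]
        congr 1
        rw [hs_def]
        field_simp
        ring
end
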